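/- Let n ≥ 1 and let (h_k)_{k=0}^n be a non-decreasing sequence of real numbers and h ≥ h_n. Then the first order branching clustering function Φ on 𝕃₀⁽ⁿ⁾ with parameters (h_k)_{k=0}^n and h is a monotone clustering function: A ≺ B implies Φ(A) ≤ Φ(B) for all A,B ⊆ 𝕃₀⁽ⁿ⁾ with |A| = |B|, and Φ(A∪B) ≤ Φ(A) + Φ(B) for all disjoint A,B ⊆ 𝕃₀⁽ⁿ⁾. -/

import Mathlib

open Filter
open scoped Classical

noncomputable section

namespace PWC

/-- Leaves of the binary tree `𝕋⁽ⁿ⁾` of depth `n`: binary words of length `n`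
(coordinate `0` is the first step away from the root). -/
abbrev Leaf (n : ℕ) := Fin n → Bool

/-- The age (distance from the leaves) of the youngest common ancestor `u ∧ v` of two
leaves: `n` minus the length of their longest common prefix. -/
def meetAge {n : ℕ} (u v : Leaf n) : ℕ :=
  if u = v then 0 else n - sInf {i : ℕ | ∃ h : i < n, u ⟨i, h⟩ ≠ v ⟨i, h⟩}

/-- Canonical representative (as a leaf) of the ancestor of `u` at age `k`:
keep the first `n - k` coordinates and pad by `false`. -/
def trunc {n : ℕ} (k : ℕ) (u : Leaf n) : Leaf n :=
  fun i => if (i : ℕ) < n - k then u i else false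

/-- The branching points `ℬ(A) ∩ 𝕃_k` of `A` of age `k`, encoded by the canonical
representatives of the corresponding ancestors. -/
def branchPts {n : ℕ} (A : Finset (Leaf n)) (k : ℕ) : Finset (Leaf n) :=
  ((A ×ˢ A).filter (fun p => meetAge p.1 p.2 = k)).image (fun p => trunc k p.1)

/-- `b_k(A)`: the number of branching points of `A` of age `k`. -/
def bcount {n : ℕ} (A : Finset (Leaf n)) (k : ℕ) : ℕ := (branchPts A k).card

/-- `b_{k,ℓ}(A)`: the number of branching points of `A` of age `ℓ` whose direct
branching ancestor has age `k`; for `k = n+1` the indicator that the oldest branching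
point of `A` has age `ℓ` (i.e. the branching points at age `ℓ` having no strictly older
branching ancestor). -/
def b2count {n : ℕ} (A : Finset (Leaf n)) (k l : ℕ) : ℕ :=
  if k = n + 1 then
    ((branchPts A l).filter (fun w => ∀ j, l < j → j ≤ n → trunc j w ∉ branchPts A j)).card
  else
    ((branchPts A l).filter (fun w => trunc k w ∈ branchPts A k ∧
      ∀ j, l < j → j < k → trunc j w ∉ branchPts A j)).card

/-- `A ≺ B` : `A` is more clustered than `B`. -/
def MoreClustered {n : ℕ} (A B : Finset (Leaf n)) : Prop :=
  ∃ σ : Leaf n → Leaf n, Set.BijOn σ ↑A ↑B ∧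
    ∀ u ∈ A, ∀ v ∈ A, meetAge u v ≤ meetAge (σ u) (σ v)

/-- `A ∼ B` : the subtrees of `𝕋⁽ⁿ⁾` generated by `A` and `B` are graph-isomorphic,
i.e. there is a bijection of the leaf sets preserving all meet ages. -/
def EquivClustered {n : ℕ} (A B : Finset (Leaf n)) : Prop :=
  ∃ σ : Leaf n → Leaf n, Set.BijOn σ ↑A ↑B ∧
    ∀ u ∈ A, ∀ v ∈ A, meetAge (σ u) (σ v) = meetAge u v

/-- A clustering function: vanishes on `∅` and is invariant under isomorphism of the
generated subtrees. -/
def IsClusteringFn {n : ℕ} (Φ : Finset (Leaf n) → ℝ) : Prop :=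
  Φ ∅ = 0 ∧ ∀ A B : Finset (Leaf n), EquivClustered A B → Φ A = Φ B

/-- A monotone clustering function. -/
def IsMonotoneClusteringFn {n : ℕ} (Φ : Finset (Leaf n) → ℝ) : Prop :=
  IsClusteringFn Φ ∧
    (∀ A B : Finset (Leaf n), MoreClustered A B → Φ A ≤ Φ B) ∧
    (∀ A B : Finset (Leaf n), Disjoint A B → Φ (A ∪ B) ≤ Φ A + Φ B)

/-- The partition function `Z_n^{Φ,J}`. -/
def Z (n : ℕ) (Φ : Finset (Leaf n) → ℝ) (J : ℝ) : ℝ :=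
  ∑ A : Finset (Leaf n), Real.exp (J * (A.card : ℝ) - Φ A)

/-- The finite-volume free energy `ζ_n^Φ(J) = 2⁻ⁿ ln Z_n^{Φ,J}`. -/
def zetaN (n : ℕ) (Φ : Finset (Leaf n) → ℝ) (J : ℝ) : ℝ :=
  Real.log (Z n Φ J) / 2 ^ n

/-- The canonical partition function `W_n^Φ(a₀)`. -/
def W (n : ℕ) (Φ : Finset (Leaf n) → ℝ) (a₀ : ℕ) : ℝ :=
  ∑ A ∈ Finset.univ.filter (fun A : Finset (Leaf n) => A.card = a₀), Real.exp (-Φ A)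

/-- The finite-volume canonical free energy `ω_n^Φ(ε) = 2⁻ⁿ ln W_n^Φ(ε 2ⁿ)` (for a
dyadic `ε ∈ [0,1]` and `n` large, `⌊ε 2ⁿ⌋ = ε 2ⁿ`). -/
def omegaN (n : ℕ) (Φ : Finset (Leaf n) → ℝ) (ε : ℝ) : ℝ :=
  Real.log (W n Φ ⌊ε * 2 ^ n⌋₊) / 2 ^ n

/-- The expected density `ρ_n^Φ(J)` of the dry set under the PWC measure. -/
def rhoN (n : ℕ) (Φ : Finset (Leaf n) → ℝ) (J : ℝ) : ℝ :=
  (∑ A : Finset (Leaf n), (A.card : ℝ) * Real.exp (J * (A.card : ℝ) - Φ A)) /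
    (2 ^ n * Z n Φ J)

/-- A dyadic rational. -/
def IsDyadic (x : ℝ) : Prop := ∃ (k : ℤ) (m : ℕ), x = (k : ℝ) / 2 ^ m

/-- The hypotheses of the general theory (Proposition 1.2): each `Φ_n` (for `n ≥ 1`) is
a monotone, non-negative clustering function, and `Φ_n(A) ≤ Φ_{n-1}(A) + γ_n` for any
`A` contained in the leaf set of one of the two subtrees of `𝕋⁽ⁿ⁾` rooted at a child of
the root (identified with `𝕋⁽ⁿ⁻¹⁾` by prepending the corresponding letter), where
`γ_n ≥ 0` and `∑ γ_n 2⁻ⁿ < ∞`. -/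
structure GoodSeq (Φ : ∀ n, Finset (Fin n → Bool) → ℝ) (γ : ℕ → ℝ) : Prop where
  mono : ∀ n, 1 ≤ n → IsMonotoneClusteringFn (Φ n)
  nonneg : ∀ n, 1 ≤ n → ∀ A, 0 ≤ Φ n A
  gamma_nonneg : ∀ n, 0 ≤ γ n
  gamma_summable : Summable fun n => γ n / 2 ^ n
  subtree : ∀ (n : ℕ) (b : Bool) (A : Finset (Fin n → Bool)),
    Φ (n + 1) (A.image fun u => Fin.cons b u) ≤ Φ n A + γ (n + 1)

/-- The first order branching clustering function with parameters `(h_k)_{k=0}^n`, `h`. -/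
def foPhi (n : ℕ) (hs : ℕ → ℝ) (h : ℝ) (A : Finset (Leaf n)) : ℝ :=
  if A = ∅ then 0 else (∑ k ∈ Finset.range (n + 1), hs k * (bcount A k : ℝ)) + h

/-- The second order branching clustering function with parameters
`(h_{k,ℓ})_{0 ≤ ℓ < k ≤ n+1}`, `h`. -/
def soPhi (n : ℕ) (H : ℕ → ℕ → ℝ) (h : ℝ) (A : Finset (Leaf n)) : ℝ :=
  if A = ∅ then 0
  else (∑ k ∈ Finset.range (n + 2), ∑ l ∈ Finset.range k, H k l * (b2count A k l : ℝ)) + h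

/-- A non-decreasing (infinite) triangular array. -/
def ArrayMono (H : ℕ → ℕ → ℝ) : Prop :=
  ∀ k k' l l' : ℕ, l < k → l' < k' → k ≤ k' → l ≤ l' → H k l ≤ H k' l'

/-- The Dirichlet energy on `𝕋⁽ⁿ⁾` of `f` (vertices encoded as words of length `≤ n`,
read from the root; a vertex of length `m` has age `n - m` and its parent edge has
conductance `C (n - m)`). -/
def energy (n : ℕ) (C : ℕ → ℝ) (f : List Bool → ℝ) : ℝ :=
  ∑ m ∈ Finset.Icc 1 n, ∑ v : Fin m → Bool,
    C (n - m) * (f (List.ofFn v) - f (List.ofFn v).dropLast) ^ 2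

/-- The capacity of a set of leaves `A ⊆ 𝕃₀⁽ⁿ⁾`. -/
def cap (n : ℕ) (C : ℕ → ℝ) (A : Finset (Leaf n)) : ℝ :=
  sInf {x : ℝ | ∃ f : List Bool → ℝ, f [] = 1 ∧ (∀ u ∈ A, f (List.ofFn u) = 0) ∧
    x = energy n C f}


-- auxiliary lemmas

lemma trunc_trunc {n : ℕ} {j k : ℕ} (hjk : j ≤ k) (u : Leaf n) :
    trunc k (trunc j u) = trunc k u := by
  funext i
  simp only [trunc]
  by_cases hi : (i : ℕ) < n - k
  · rw [if_pos hi, if_pos hi, if_pos (lt_of_lt_of_le hi (Nat.sub_le_sub_left hjk n))]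
  · rw [if_neg hi, if_neg hi]

lemma meetAge_self {n : ℕ} (u : Leaf n) : meetAge u u = 0 := by simp [meetAge]

lemma trunc_eq_iff {n : ℕ} {k : ℕ} (u v : Leaf n) :
    trunc k u = trunc k v ↔ meetAge u v ≤ k := by
  by_cases huv : u = v
  · subst huv; simp [meetAge_self]
  · have h1 : trunc k u = trunc k v ↔ ∀ i : Fin n, (i : ℕ) < n - k → u i = v i := by
      constructor
      · intro hfe i hi
        have := congrFun hfe i
        simpa [trunc, hi] using this
      · intro hp; funext i; simp only [trunc]
        by_cases hi : (i : ℕ) < n - k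
        · simp [hi, hp i hi]
        · simp [hi]
    set S : Set ℕ := {i : ℕ | ∃ h : i < n, u ⟨i, h⟩ ≠ v ⟨i, h⟩} with hSdef
    have hSne : S.Nonempty := by
      by_contra hcon
      apply huv; funext i
      by_contra hne
      exact hcon ⟨(i : ℕ), i.isLt, by simpa using hne⟩
    obtain ⟨hlt, hne⟩ := Nat.sInf_mem hSne
    have hma : meetAge u v = n - sInf S := by rw [meetAge, if_neg huv]
    rw [hma, h1]
    constructor
    · intro hp
      have hge : n - k ≤ sInf S := by
        by_contra hc
        push_neg at hc
        exact hne (by simpa using hp ⟨sInf S, hlt⟩ hc)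
      omega
    · intro hle i hi
      by_contra hne2
      have hiS : (i : ℕ) ∈ S := ⟨i.isLt, by simpa using hne2⟩
      have := Nat.sInf_le hiS
      omega

lemma meetAge_comm {n : ℕ} (u v : Leaf n) : meetAge u v = meetAge v u := by
  unfold meetAge
  rcases eq_or_ne u v with rfl | h
  · simp
  · rw [if_neg h, if_neg (Ne.symm h)]
    congr 2
    ext i
    exact ⟨fun ⟨hi, hne⟩ => ⟨hi, hne.symm⟩, fun ⟨hi, hne⟩ => ⟨hi, hne.symm⟩⟩

lemma trunc_zero {n : ℕ} (u : Leaf n) : trunc 0 u = u := by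
  funext i; simp [trunc, i.isLt]

lemma mem_branchPts {n : ℕ} {A : Finset (Leaf n)} {k : ℕ} {w : Leaf n} :
    w ∈ branchPts A k ↔ ∃ u ∈ A, ∃ v ∈ A, meetAge u v = k ∧ trunc k u = w := by
  simp only [branchPts, Finset.mem_image, Finset.mem_filter, Finset.mem_product]
  constructor
  · rintro ⟨⟨a, b⟩, ⟨⟨ha, hb⟩, hm⟩, ht⟩
    exact ⟨a, ha, b, hb, hm, ht⟩
  · rintro ⟨u, hu, v, hv, hm, ht⟩
    exact ⟨(u, v), ⟨⟨hu, hv⟩, hm⟩, ht⟩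

lemma branchPts_zero {n : ℕ} (A : Finset (Leaf n)) : branchPts A 0 = A := by
  ext w
  rw [mem_branchPts]
  constructor
  · rintro ⟨u, hu, v, hv, hm, ht⟩
    rw [trunc_zero] at ht; subst ht; exact hu
  · intro hw; exact ⟨w, hw, w, hw, meetAge_self w, trunc_zero w⟩

lemma branchPts_subset {n : ℕ} (A : Finset (Leaf n)) (k : ℕ) :
    branchPts A k ⊆ A.image (trunc k) := by
  intro w hw
  rw [mem_branchPts] at hw
  obtain ⟨u, hu, v, hv, hm, ht⟩ := hw
  exact Finset.mem_image.2 ⟨u, hu, ht⟩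

lemma card_image_trunc {n : ℕ} (A : Finset (Leaf n)) {k : ℕ} (hk : k < n) :
    (A.image (trunc k)).card = (A.image (trunc (k+1))).card + bcount A (k+1) := by
  classical
  have hmap : ∀ x ∈ A.image (trunc k), trunc (k+1) x ∈ A.image (trunc (k+1)) := by
    intro x hx
    obtain ⟨u, hu, rfl⟩ := Finset.mem_image.1 hx
    rw [trunc_trunc (Nat.le_succ k)]
    exact Finset.mem_image_of_mem _ hu
  rw [Finset.card_eq_sum_card_fiberwise hmap]
  have hfib : ∀ w ∈ A.image (trunc (k+1)),
      ((A.image (trunc k)).filter (fun x => trunc (k+1) x = w)).card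
        = if w ∈ branchPts A (k+1) then 2 else 1 := by
    intro w hw
    obtain ⟨a, ha, rfl⟩ := Finset.mem_image.1 hw
    set w := trunc (k+1) a with hwdef
    set Fw := (A.image (trunc k)).filter (fun x => trunc (k+1) x = w) with hFw
    have hmem : ∀ x, x ∈ Fw ↔ (∃ u ∈ A, trunc k u = x) ∧ trunc (k+1) x = w := by
      intro x; simp [hFw, Finset.mem_filter, Finset.mem_image]
    have h1 : trunc k a ∈ Fw := by
      rw [hmem]
      exact ⟨⟨a, ha, rfl⟩, by rw [trunc_trunc (Nat.le_succ k)]⟩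
    have hpos : 1 ≤ Fw.card := Finset.card_pos.2 ⟨_, h1⟩
    have hle2 : Fw.card ≤ 2 := by
      have hm : n - (k+1) < n := by omega
      set ext : Bool → Leaf n := fun b => fun i => if (i : ℕ) = n - (k+1) then b else w i with hext
      have hsub : Fw ⊆ {ext false, ext true} := by
        intro x hx
        rw [hmem] at hx
        obtain ⟨⟨u, hu, rfl⟩, hx2⟩ := hx
        rw [trunc_trunc (Nat.le_succ k)] at hx2
        have hxe : trunc k u = ext (trunc k u ⟨n - (k+1), hm⟩) := by
          funext i
          by_cases hi1 : (i : ℕ) = n - (k+1)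
          · have : i = ⟨n - (k+1), hm⟩ := Fin.ext hi1
            rw [this]; simp [hext, hi1]
          · simp only [hext, if_neg hi1, ← hx2]
            by_cases hi2 : (i : ℕ) < n - (k+1)
            · have hik : (i : ℕ) < n - k := by omega
              simp [trunc, hi2, hik]
            · have hik : ¬ (i : ℕ) < n - k := by omega
              simp [trunc, hi2, hik]
        rw [hxe]
        rcases Bool.dichotomy (trunc k u ⟨n - (k+1), hm⟩) with hb | hb <;> rw [hb] <;> simp
      calc Fw.card ≤ ({ext false, ext true} : Finset (Leaf n)).card := Finset.card_le_card hsub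
        _ ≤ 2 := (Finset.card_insert_le _ _).trans (by simp)
    have hiff : 2 ≤ Fw.card ↔ w ∈ branchPts A (k+1) := by
      constructor
      · intro h2
        obtain ⟨x, hx, y, hy, hxy⟩ := Finset.one_lt_card.1 h2
        rw [hmem] at hx hy
        obtain ⟨⟨u, hu, rfl⟩, hx2⟩ := hx
        obtain ⟨⟨v, hv, rfl⟩, hy2⟩ := hy
        rw [trunc_trunc (Nat.le_succ k)] at hx2 hy2
        have hme : meetAge u v ≤ k + 1 := by
          rw [← trunc_eq_iff, hx2, hy2]
        have hgt : ¬ meetAge u v ≤ k := by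
          rw [← trunc_eq_iff]
          exact hxy
        rw [mem_branchPts]
        exact ⟨u, hu, v, hv, le_antisymm hme (by omega), hx2⟩
      · intro hwb
        rw [mem_branchPts] at hwb
        obtain ⟨u, hu, v, hv, hmuv, htu⟩ := hwb
        apply Finset.one_lt_card.2
        refine ⟨trunc k u, ?_, trunc k v, ?_, ?_⟩
        · rw [hmem]
          exact ⟨⟨u, hu, rfl⟩, by rw [trunc_trunc (Nat.le_succ k), htu]⟩
        · rw [hmem]
          refine ⟨⟨v, hv, rfl⟩, ?_⟩
          rw [trunc_trunc (Nat.le_succ k), ← htu]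
          rw [trunc_eq_iff, meetAge_comm]
          omega
        · intro hc
          rw [trunc_eq_iff] at hc
          omega
    split
    · next hbp => exact le_antisymm hle2 (hiff.2 hbp)
    · next hbp =>
      have : ¬ 2 ≤ Fw.card := fun hc => hbp (hiff.1 hc)
      omega
  rw [Finset.sum_congr rfl hfib]
  have hconv : ∀ w ∈ A.image (trunc (k+1)),
      (if w ∈ branchPts A (k+1) then (2:ℕ) else 1)
        = 1 + (if w ∈ branchPts A (k+1) then 1 else 0) := by
    intro w _; split <;> rfl
  rw [Finset.sum_congr rfl hconv, Finset.sum_add_distrib]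
  simp only [Finset.sum_const, smul_eq_mul, mul_one, Finset.sum_ite_mem]
  have : A.image (trunc (k+1)) ∩ branchPts A (k+1) = branchPts A (k+1) :=
    Finset.inter_eq_right.2 (branchPts_subset A (k+1))
  rw [this]
  rfl

def sreal {n : ℕ} (A : Finset (Leaf n)) (k : ℕ) : ℝ := ((A.image (trunc k)).card : ℝ)

lemma sreal_succ {n : ℕ} (A : Finset (Leaf n)) {k : ℕ} (hk : k < n) :
    sreal A k = sreal A (k+1) + (bcount A (k+1) : ℝ) := by
  unfold sreal
  rw [card_image_trunc A hk]
  push_cast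
  ring

lemma sreal_zero {n : ℕ} (A : Finset (Leaf n)) : sreal A 0 = (A.card : ℝ) := by
  unfold sreal
  have : trunc (n := n) 0 = id := funext trunc_zero
  rw [this, Finset.image_id]

lemma sreal_top {n : ℕ} {A : Finset (Leaf n)} (hA : A.Nonempty) : sreal A n = 1 := by
  unfold sreal
  have : trunc (n := n) n = fun _ => (fun _ => false : Leaf n) := by
    funext u i; simp [trunc]
  rw [this, Finset.image_const hA, Finset.card_singleton, Nat.cast_one]

lemma sreal_union_le {n : ℕ} (A B : Finset (Leaf n)) (k : ℕ) :
    sreal (A ∪ B) k ≤ sreal A k + sreal B k := by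
  unfold sreal
  rw [Finset.image_union]
  exact_mod_cast Finset.card_union_le _ _

lemma bcount_zero {n : ℕ} (A : Finset (Leaf n)) : bcount A 0 = A.card := by
  rw [bcount, branchPts_zero]

lemma abel_sum (f g : ℕ → ℝ) (N : ℕ) :
    ∑ k ∈ Finset.range N, (f (k+1) * g k - f (k+1) * g (k+1))
      = ∑ k ∈ Finset.range N, (f (k+1) - f k) * g k + (f 0 * g 0 - f N * g N) := by
  induction N with
  | zero => simp
  | succ N ih => rw [Finset.sum_range_succ, Finset.sum_range_succ, ih]; ring

def Fsum (n : ℕ) (hs : ℕ → ℝ) (A : Finset (Leaf n)) : ℝ :=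
  ∑ k ∈ Finset.range (n+1), hs k * (bcount A k : ℝ)

lemma Fsum_eq {n : ℕ} (hs : ℕ → ℝ) (A : Finset (Leaf n)) :
    Fsum n hs A = hs 0 * (A.card : ℝ)
      + ∑ k ∈ Finset.range n, (hs (k+1) * sreal A k - hs (k+1) * sreal A (k+1)) := by
  rw [Fsum, Finset.sum_range_succ']
  rw [bcount_zero]
  rw [add_comm]
  congr 1
  apply Finset.sum_congr rfl
  intro k hk
  have hkn : k < n := Finset.mem_range.1 hk
  rw [sreal_succ A hkn]
  ring

lemma Fsum_diff {n : ℕ} (hs : ℕ → ℝ) (A B : Finset (Leaf n))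
    (hcard : (A.card : ℝ) = (B.card : ℝ)) (hn' : sreal B n - sreal A n = 0) :
    Fsum n hs B - Fsum n hs A
      = ∑ k ∈ Finset.range n, (hs (k+1) - hs k) * (sreal B k - sreal A k) := by
  rw [Fsum_eq hs A, Fsum_eq hs B]
  have habel := abel_sum hs (fun k => sreal B k - sreal A k) n
  have hg0 : sreal B 0 - sreal A 0 = 0 := by
    rw [sreal_zero, sreal_zero, hcard]; ring
  have hdsum : (∑ k ∈ Finset.range n, (hs (k+1) * sreal B k - hs (k+1) * sreal B (k+1)))
      - (∑ k ∈ Finset.range n, (hs (k+1) * sreal A k - hs (k+1) * sreal A (k+1)))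
      = ∑ k ∈ Finset.range n, (hs (k+1) * (sreal B k - sreal A k)
          - hs (k+1) * (sreal B (k+1) - sreal A (k+1))) := by
    rw [← Finset.sum_sub_distrib]
    apply Finset.sum_congr rfl
    intro k _
    ring
  rw [hg0, hn'] at habel
  have hc2 : hs 0 * (B.card : ℝ) = hs 0 * (A.card : ℝ) := by rw [hcard]
  linarith [hdsum, habel, hc2]

lemma Fsum_le {n : ℕ} (hs : ℕ → ℝ) (hmono : ∀ k l : ℕ, k ≤ l → l ≤ n → hs k ≤ hs l)
    (A B : Finset (Leaf n)) (hcard : A.card = B.card)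
    (hsk : ∀ k, sreal A k ≤ sreal B k) (hn' : sreal A n = sreal B n) :
    Fsum n hs A ≤ Fsum n hs B := by
  have hd := Fsum_diff hs A B (by exact_mod_cast hcard) (by rw [hn']; ring)
  have hnn : 0 ≤ ∑ k ∈ Finset.range n, (hs (k+1) - hs k) * (sreal B k - sreal A k) := by
    apply Finset.sum_nonneg
    intro k hk
    have hkn : k + 1 ≤ n := Finset.mem_range.1 hk
    have := hmono k (k+1) (Nat.le_succ k) hkn
    have := hsk k
    nlinarith
  linarith

-- surjection argument
lemma card_image_le_of_bijOn {n : ℕ} {A B : Finset (Leaf n)} (σ : Leaf n → Leaf n)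
    (hbij : Set.BijOn σ ↑A ↑B)
    (hm : ∀ u ∈ A, ∀ v ∈ A, meetAge u v ≤ meetAge (σ u) (σ v)) (k : ℕ) :
    (A.image (trunc k)).card ≤ (B.image (trunc k)).card := by
  classical
  set f : Leaf n → Leaf n := fun w =>
    if h : ∃ u, u ∈ A ∧ trunc k (σ u) = w then trunc k h.choose else w with hf
  apply Finset.card_le_card_of_surjOn f
  intro x hx
  simp only [Finset.coe_image, Set.mem_image, Finset.mem_coe] at hx ⊢
  obtain ⟨u, hu, rfl⟩ := hx
  refine ⟨trunc k (σ u), ⟨σ u, hbij.mapsTo hu, rfl⟩, ?_⟩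
  have hex : ∃ u', u' ∈ A ∧ trunc k (σ u') = trunc k (σ u) := ⟨u, hu, rfl⟩
  rw [hf]
  simp only [dif_pos hex]
  obtain ⟨hu', he⟩ := hex.choose_spec
  rw [trunc_eq_iff] at he ⊢
  exact le_trans (hm _ hu' _ hu) he

lemma Fsum_subadd {n : ℕ} (hs : ℕ → ℝ) (hmono : ∀ k l : ℕ, k ≤ l → l ≤ n → hs k ≤ hs l)
    (A B : Finset (Leaf n)) (hd : Disjoint A B) (hA : A.Nonempty) (hB : B.Nonempty) :
    Fsum n hs (A ∪ B) ≤ Fsum n hs A + Fsum n hs B + hs n := by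
  set g : ℕ → ℝ := fun k => sreal A k + sreal B k - sreal (A ∪ B) k with hgdef
  have hg : ∀ k, 0 ≤ g k := fun k => by
    simp only [hgdef]; linarith [sreal_union_le A B k]
  have hcard : ((A ∪ B).card : ℝ) = (A.card : ℝ) + (B.card : ℝ) := by
    rw [Finset.card_union_of_disjoint hd]; push_cast; ring
  have hg0 : g 0 = 0 := by
    simp only [hgdef, sreal_zero, hcard]; ring
  have hgn : g n = 1 := by
    simp only [hgdef, sreal_top hA, sreal_top hB, sreal_top (hA.mono Finset.subset_union_left)]
    norm_num
  have habel := abel_sum hs g n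
  rw [hg0, hgn] at habel
  have hdsum : (∑ k ∈ Finset.range n, (hs (k+1) * sreal A k - hs (k+1) * sreal A (k+1)))
      + (∑ k ∈ Finset.range n, (hs (k+1) * sreal B k - hs (k+1) * sreal B (k+1)))
      - (∑ k ∈ Finset.range n, (hs (k+1) * sreal (A ∪ B) k - hs (k+1) * sreal (A ∪ B) (k+1)))
      = ∑ k ∈ Finset.range n, (hs (k+1) * g k - hs (k+1) * g (k+1)) := by
    rw [← Finset.sum_add_distrib, ← Finset.sum_sub_distrib]
    apply Finset.sum_congr rfl
    intro k _
    simp only [hgdef]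
    ring
  have hnn : 0 ≤ ∑ k ∈ Finset.range n, (hs (k+1) - hs k) * g k := by
    apply Finset.sum_nonneg
    intro k hk
    have hkn : k + 1 ≤ n := Finset.mem_range.1 hk
    exact mul_nonneg (by linarith [hmono k (k+1) (Nat.le_succ k) hkn]) (hg k)
  have hc2 : hs 0 * ((A.card : ℝ) + (B.card : ℝ))
      = hs 0 * (A.card : ℝ) + hs 0 * (B.card : ℝ) := by ring
  rw [Fsum_eq, Fsum_eq, Fsum_eq, hcard]
  linarith [habel, hdsum, hnn, hc2]

def MoreClustered' {n : ℕ} (A B : Finset (Leaf n)) : Prop :=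
  ∃ σ : Leaf n → Leaf n, Set.BijOn σ ↑A ↑B ∧
    ∀ u ∈ A, ∀ v ∈ A, meetAge u v ≤ meetAge (σ u) (σ v)

lemma moreClustered'_card {n : ℕ} {A B : Finset (Leaf n)} (h : MoreClustered' A B) :
    A.card = B.card := by
  obtain ⟨σ, hbij, -⟩ := h
  exact le_antisymm
    (Finset.card_le_card_of_injOn σ (fun a ha => hbij.mapsTo ha) hbij.injOn)
    (Finset.card_le_card_of_surjOn σ hbij.surjOn)

lemma moreClustered'_sreal {n : ℕ} {A B : Finset (Leaf n)} (h : MoreClustered' A B) (k : ℕ) :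
    sreal A k ≤ sreal B k := by
  obtain ⟨σ, hbij, hm⟩ := h
  unfold sreal
  exact_mod_cast card_image_le_of_bijOn σ hbij hm k

/-- Proposition 1.11: if `(h_k)_{k=0}^n` is non-decreasing and
`h ≥ h_n`, then the first order branching clustering function with parameters
`(h_k)_{k=0}^n` and `h` is a monotone clustering function. -/
theorem stmt4 (n : ℕ) (hn : 1 ≤ n) (hs : ℕ → ℝ) (h : ℝ)
    (hmono : ∀ k l : ℕ, k ≤ l → l ≤ n → hs k ≤ hs l) (hh : hs n ≤ h) :
    IsMonotoneClusteringFn (foPhi n hs h) := by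
  classical
  have hΦle : ∀ A B : Finset (Leaf n), MoreClustered A B → foPhi n hs h A ≤ foPhi n hs h B := by
    intro A B hM
    have hM' : MoreClustered' A B := hM
    have hcard : A.card = B.card := moreClustered'_card hM'
    by_cases hA : A = ∅
    · have hB : B = ∅ := Finset.card_eq_zero.1 (by rw [← hcard, hA, Finset.card_empty])
      simp [foPhi, hA, hB]
    · have hB : B ≠ ∅ := by
        intro hBe
        exact hA (Finset.card_eq_zero.1 (by rw [hcard, hBe, Finset.card_empty]))
      have hAne : A.Nonempty := Finset.nonempty_iff_ne_empty.2 hA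
      have hBne : B.Nonempty := Finset.nonempty_iff_ne_empty.2 hB
      rw [foPhi, foPhi, if_neg hA, if_neg hB]
      have hF : Fsum n hs A ≤ Fsum n hs B :=
        Fsum_le hs hmono A B hcard (moreClustered'_sreal hM')
          (by rw [sreal_top hAne, sreal_top hBne])
      exact add_le_add_left hF h
  refine ⟨⟨by simp [foPhi], ?_⟩, hΦle, ?_⟩
  · intro A B hE
    obtain ⟨σ, hbij, hme⟩ := hE
    have h1 : MoreClustered A B := ⟨σ, hbij, fun u hu v hv => le_of_eq (hme u hu v hv).symm⟩
    have h2 : MoreClustered B A := by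
      have hinv := hbij.invOn_invFunOn
      have hgbij : Set.BijOn (Function.invFunOn σ ↑A) ↑B ↑A := Set.BijOn.symm hinv.symm hbij
      refine ⟨Function.invFunOn σ ↑A, hgbij, ?_⟩
      intro x hx y hy
      have hgx : Function.invFunOn σ ↑A x ∈ A := Finset.mem_coe.1 (hgbij.mapsTo hx)
      have hgy : Function.invFunOn σ ↑A y ∈ A := Finset.mem_coe.1 (hgbij.mapsTo hy)
      have hex : σ (Function.invFunOn σ ↑A x) = x := hinv.2 hx
      have hey : σ (Function.invFunOn σ ↑A y) = y := hinv.2 hy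
      have : meetAge x y = meetAge (Function.invFunOn σ ↑A x) (Function.invFunOn σ ↑A y) := by
        conv_lhs => rw [← hex, ← hey]
        exact hme _ hgx _ hgy
      exact le_of_eq this
    exact le_antisymm (hΦle A B h1) (hΦle B A h2)
  · intro A B hd
    by_cases hA : A = ∅
    · rw [hA, Finset.empty_union]
      have : foPhi n hs h ∅ = 0 := by simp [foPhi]
      rw [this, zero_add]
    · by_cases hB : B = ∅
      · rw [hB, Finset.union_empty]
        have : foPhi n hs h ∅ = 0 := by simp [foPhi]
        rw [this, add_zero]
      · have hAne : A.Nonempty := Finset.nonempty_iff_ne_empty.2 hA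
        have hBne : B.Nonempty := Finset.nonempty_iff_ne_empty.2 hB
        have hU : A ∪ B ≠ ∅ := Finset.nonempty_iff_ne_empty.1 (hAne.mono Finset.subset_union_left)
        rw [foPhi, foPhi, foPhi, if_neg hA, if_neg hB, if_neg hU]
        have hsub := Fsum_subadd hs hmono A B hd hAne hBne
        show Fsum n hs (A ∪ B) + h ≤ Fsum n hs A + h + (Fsum n hs B + h)
        linarith [hsub, hh]

end PWC
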